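/- Let n ≥ d ≥ 1. If τ₁, …, τₙ are unit vectors in ℂ^d, then for every natural number m ≥ 1, the sum over all pairs j,k of |⟨τⱼ, τₖ⟩|^{2m} is at least n² / C(d+m-1, m). -/

import Mathlib

open Finset

lemma welch_expand {d m : ℕ} (x y : EuclideanSpace ℂ (Fin d)) :
    (inner ℂ x y : ℂ) ^ m =
      ∑ k : Sym (Fin d) m, (k.val.countPerms : ℂ) *
        ((starRingEnd ℂ) ((k.val.map x).prod) * (k.val.map y).prod) := by
  have h1 : (inner ℂ x y : ℂ) = ∑ i : Fin d, (starRingEnd ℂ) (x i) * y i := by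
    rw [PiLp.inner_apply]; simp only [RCLike.inner_apply']
  rw [h1]
  rw [show (∑ i : Fin d, (starRingEnd ℂ) (x i) * y i)
      = Finset.univ.sum (fun i => (starRingEnd ℂ) (x i) * y i) from rfl,
    Finset.sum_pow, Finset.sym_univ]
  refine Finset.sum_congr rfl fun k _ => ?_
  congr 1
  rw [Multiset.prod_map_mul, map_multiset_prod (starRingEnd ℂ), Multiset.map_map]
  rfl

lemma welch_norm {d m : ℕ} (x : EuclideanSpace ℂ (Fin d)) (hx : ‖x‖ = 1) :
    ∑ k : Sym (Fin d) m, (k.val.countPerms : ℝ) *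
      Complex.normSq ((k.val.map x).prod) = 1 := by
  have h2 : ∑ i : Fin d, Complex.normSq (x i) = 1 := by
    have h := EuclideanSpace.norm_eq x
    rw [hx] at h
    have h3 : ∑ i : Fin d, ‖x i‖ ^ 2 = 1 := by
      have h4 := congrArg (· ^ 2) h.symm
      simp only [one_pow] at h4
      rw [Real.sq_sqrt (Finset.sum_nonneg fun i _ => sq_nonneg ‖x i‖)] at h4
      exact h4
    simpa [Complex.normSq_eq_norm_sq] using h3
  have h5 := Finset.sum_pow (s := (Finset.univ : Finset (Fin d)))
    (fun i => Complex.normSq (x i)) m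
  rw [show Finset.univ.sum (fun i => Complex.normSq (x i)) = 1 from h2, one_pow,
    Finset.sym_univ] at h5
  rw [show (1 : ℝ) = ∑ k : Sym (Fin d) m, (k.val.countPerms : ℝ) *
      (k.val.map fun i => Complex.normSq (x i)).prod from h5]
  refine Finset.sum_congr rfl fun k _ => ?_
  congr 1
  rw [show Complex.normSq ((k.val.map x).prod)
      = ((k.val.map x).map Complex.normSq).prod from map_multiset_prod Complex.normSq _,
    Multiset.map_map]
  rfl

lemma sum_swap4 {M : Type*} [AddCommMonoid M] {p q r s : Type*}
    [Fintype p] [Fintype q] [Fintype r] [Fintype s] (f : p → q → r → s → M) :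
    ∑ a, ∑ b, ∑ x, ∑ y, f a b x y = ∑ x, ∑ y, ∑ a, ∑ b, f a b x y := by
  calc ∑ a, ∑ b, ∑ x, ∑ y, f a b x y
      = ∑ z : p × q, ∑ x, ∑ y, f z.1 z.2 x y :=
        (Fintype.sum_prod_type' (fun a b => ∑ x, ∑ y, f a b x y)).symm
    _ = ∑ z : p × q, ∑ w : r × s, f z.1 z.2 w.1 w.2 :=
        Finset.sum_congr rfl fun z _ => (Fintype.sum_prod_type' (f z.1 z.2)).symm
    _ = ∑ w : r × s, ∑ z : p × q, f z.1 z.2 w.1 w.2 := Finset.sum_comm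
    _ = ∑ w : r × s, ∑ a, ∑ b, f a b w.1 w.2 :=
        Finset.sum_congr rfl fun w _ => Fintype.sum_prod_type' (fun a b => f a b w.1 w.2)
    _ = ∑ x, ∑ y, ∑ a, ∑ b, f a b x y :=
        Fintype.sum_prod_type' (fun x y => ∑ a, ∑ b, f a b x y)

lemma gram_bound {ι : Type*} [Fintype ι] {n : ℕ} (v : Fin n → ι → ℂ) :
    (∑ j, ∑ a, Complex.normSq (v j a)) ^ 2 / (Fintype.card ι : ℝ)
      ≤ ∑ j, ∑ j', Complex.normSq (∑ a, (starRingEnd ℂ) (v j a) * v j' a) := by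
  classical
  set G : Fin n → Fin n → ℂ := fun j j' => ∑ a, (starRingEnd ℂ) (v j a) * v j' a with hG
  set T : ι → ι → ℂ := fun a b => ∑ j, v j a * (starRingEnd ℂ) (v j b) with hT
  -- complex identity
  have C1 : ∑ j, ∑ j', G j j' * (starRingEnd ℂ) (G j j')
      = ∑ a, ∑ b, T b a * (starRingEnd ℂ) (T b a) := by
    have lhs : ∀ j j', G j j' * (starRingEnd ℂ) (G j j')
        = ∑ a, ∑ b, ((starRingEnd ℂ) (v j a) * v j' a) *
            (v j b * (starRingEnd ℂ) (v j' b)) := by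
      intro j j'
      have hconj : (starRingEnd ℂ) (G j j')
          = ∑ b, v j b * (starRingEnd ℂ) (v j' b) := by
        rw [hG]; simp [map_sum, mul_comm]
      rw [hG, hconj]
      exact Finset.sum_mul_sum _ _ _ _
    have rhs : ∀ a b, T b a * (starRingEnd ℂ) (T b a)
        = ∑ j, ∑ j', ((starRingEnd ℂ) (v j a) * v j' a) *
            (v j b * (starRingEnd ℂ) (v j' b)) := by
      intro a b
      have hconj : (starRingEnd ℂ) (T b a)
          = ∑ j', (starRingEnd ℂ) (v j' b) * v j' a := by
        rw [hT]; simp [map_sum]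
      rw [hT, hconj, Finset.sum_mul_sum]
      exact Finset.sum_congr rfl fun j _ => Finset.sum_congr rfl fun j' _ => by ring
    simp_rw [lhs, rhs]
    exact sum_swap4 _
  -- take real parts
  have C2 : ∑ j, ∑ j', Complex.normSq (G j j')
      = ∑ a, ∑ b, Complex.normSq (T b a) := by
    have := congrArg Complex.re C1
    simpa [Complex.mul_conj] using this
  -- diagonal bound
  set t : ι → ℝ := fun a => ∑ j, Complex.normSq (v j a) with ht
  have hTdiag : ∀ a, T a a = (t a : ℂ) := by
    intro a
    rw [hT, ht]
    push_cast
    exact Finset.sum_congr rfl fun j _ => (Complex.mul_conj _)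
  have hdiag : ∑ a, (t a) ^ 2 ≤ ∑ a, ∑ b, Complex.normSq (T b a) := by
    calc ∑ a, (t a) ^ 2 = ∑ a, Complex.normSq (T a a) := by
          refine Finset.sum_congr rfl fun a _ => ?_
          rw [hTdiag a, Complex.normSq_ofReal]; ring
      _ ≤ ∑ a, ∑ b, Complex.normSq (T b a) :=
          Finset.sum_le_sum fun a _ =>
            Finset.single_le_sum (f := fun b => Complex.normSq (T b a))
              (fun b _ => Complex.normSq_nonneg _) (Finset.mem_univ a)
  -- Cauchy-Schwarz
  have hCS : (∑ a, t a) ^ 2 ≤ (Fintype.card ι : ℝ) * ∑ a, (t a) ^ 2 := by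
    have := Finset.sum_mul_sq_le_sq_mul_sq Finset.univ (fun _ : ι => (1 : ℝ)) t
    simpa [Finset.card_univ] using this
  -- assemble
  have hswap : ∑ j, ∑ a, Complex.normSq (v j a) = ∑ a, t a := Finset.sum_comm
  rw [hswap]
  rcases Nat.eq_zero_or_pos (Fintype.card ι) with hc | hc
  · simp only [hc, Nat.cast_zero, div_zero]
    exact Finset.sum_nonneg fun j _ => Finset.sum_nonneg fun j' _ => Complex.normSq_nonneg _
  · rw [div_le_iff₀ (by exact_mod_cast hc)]
    calc (∑ a, t a) ^ 2 ≤ (Fintype.card ι : ℝ) * ∑ a, (t a) ^ 2 := hCS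
      _ ≤ (Fintype.card ι : ℝ) * ∑ a, ∑ b, Complex.normSq (T b a) := by
          exact mul_le_mul_of_nonneg_left hdiag (by positivity)
      _ = (∑ j, ∑ j', Complex.normSq (G j j')) * (Fintype.card ι : ℝ) := by
          rw [C2]; ring

/-- **Welch bound of order m.** For `n ≥ d ≥ 1` unit vectors `τ₁,…,τₙ` in `ℂ^d` and `m ≥ 1`,
`∑ⱼ∑ₖ |⟨τⱼ,τₖ⟩|^(2m) ≥ n² / C(d+m-1, m)`. -/
theorem welch_bound (d n : ℕ) (hd : 1 ≤ d) (hdn : d ≤ n)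
    (τ : Fin n → EuclideanSpace ℂ (Fin d)) (hτ : ∀ j, ‖τ j‖ = 1)
    (m : ℕ) (hm : 1 ≤ m) :
    (n : ℝ) ^ 2 / ((d + m - 1).choose m : ℝ) ≤
      ∑ j, ∑ k, ‖(inner ℂ (τ j) (τ k) : ℂ)‖ ^ (2 * m) := by
  classical
  set W : Fin n → Sym (Fin d) m → ℂ :=
    fun j k => (Real.sqrt (k.val.countPerms : ℝ) : ℂ) * (k.val.map (τ j)).prod with hW
  have hWmul : ∀ (j j' : Fin n) (k : Sym (Fin d) m),
      (starRingEnd ℂ) (W j k) * W j' k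
        = ((k.val.countPerms : ℕ) : ℂ) *
            ((starRingEnd ℂ) ((k.val.map (τ j)).prod) * (k.val.map (τ j')).prod) := by
    intro j j' k
    rw [hW]
    simp only [map_mul, Complex.conj_ofReal]
    rw [show ((Real.sqrt (k.val.countPerms : ℝ) : ℂ)) * (starRingEnd ℂ) ((k.val.map (τ j)).prod)
        * ((Real.sqrt (k.val.countPerms : ℝ) : ℂ) * (k.val.map (τ j')).prod)
        = ((Real.sqrt (k.val.countPerms : ℝ) : ℂ) * (Real.sqrt (k.val.countPerms : ℝ) : ℂ))
          * ((starRingEnd ℂ) ((k.val.map (τ j)).prod) * (k.val.map (τ j')).prod) from by ring]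
    congr 1
    rw [← Complex.ofReal_mul, Real.mul_self_sqrt (Nat.cast_nonneg _)]
    norm_num
  have hWnormSq : ∀ (j : Fin n) (k : Sym (Fin d) m),
      Complex.normSq (W j k)
        = (k.val.countPerms : ℝ) * Complex.normSq ((k.val.map (τ j)).prod) := by
    intro j k
    rw [hW]
    simp only [Complex.normSq_mul, Complex.normSq_ofReal]
    rw [Real.mul_self_sqrt (Nat.cast_nonneg _)]
  -- inner products of W give powers of inner products of τ
  have hWinner : ∀ j j' : Fin n,
      (∑ k : Sym (Fin d) m, (starRingEnd ℂ) (W j k) * W j' k)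
        = (inner ℂ (τ j) (τ j') : ℂ) ^ m := by
    intro j j'
    rw [welch_expand (τ j) (τ j')]
    exact Finset.sum_congr rfl fun k _ => hWmul j j' k
  -- each W j has squared norm 1
  have hWnorm : ∀ j : Fin n, ∑ k : Sym (Fin d) m, Complex.normSq (W j k) = 1 := by
    intro j
    rw [show ∑ k : Sym (Fin d) m, Complex.normSq (W j k)
        = ∑ k : Sym (Fin d) m, (k.val.countPerms : ℝ) *
            Complex.normSq ((k.val.map (τ j)).prod) from
      Finset.sum_congr rfl fun k _ => hWnormSq j k]
    exact welch_norm (τ j) (hτ j)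
  have hcard : (Fintype.card (Sym (Fin d) m) : ℝ) = ((d + m - 1).choose m : ℝ) := by
    rw [Sym.card_sym_eq_choose, Fintype.card_fin]
  have hmain := gram_bound W
  rw [hcard] at hmain
  have htr : ∑ j : Fin n, ∑ k : Sym (Fin d) m, Complex.normSq (W j k) = (n : ℝ) := by
    rw [Finset.sum_congr rfl fun j _ => hWnorm j]
    simp
  rw [htr] at hmain
  refine hmain.trans (le_of_eq ?_)
  refine Finset.sum_congr rfl fun j _ => Finset.sum_congr rfl fun j' _ => ?_
  rw [hWinner j j']
  rw [← Complex.sq_norm, norm_pow, ← pow_mul, mul_comm m 2]
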